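/- Let Ω ⊆ ℝⁿ be an open set and β > 0. Let (p_j) be a sequence of real numbers with p_j > 4 and p_j → ∞, and let (λ_j) be real numbers with λ_j < 0 and (−λ_j)^{1/p_j} → β. For each j, let u_j : Ω → ℝ be a continuous positive viscosity solution of −Δ_{p_j} u_j = λ_j |u_j|^{p_j−2} u_j in Ω. Assume u_j → u locally uniformly on Ω, where u : Ω → ℝ is continuous and positive. Then u is a viscosity solution of −min{|∇u| − βu, Δ∞u} = 0 in Ω. -/

import Mathlib

open scoped Topology InnerProductSpace
open Filter

/-- The infinity Laplacian `Δ∞φ(x) = ⟨D²φ(x)·∇φ(x), ∇φ(x)⟩`. -/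
noncomputable def infLap {n : ℕ} (φ : EuclideanSpace ℝ (Fin n) → ℝ)
    (x : EuclideanSpace ℝ (Fin n)) : ℝ :=
  ⟪(fderiv ℝ (gradient φ) x) (gradient φ x), gradient φ x⟫_ℝ

/-- The Laplacian `Δφ(x)`, the trace of the Hessian. -/
noncomputable def lapl {n : ℕ} (φ : EuclideanSpace ℝ (Fin n) → ℝ)
    (x : EuclideanSpace ℝ (Fin n)) : ℝ :=
  ∑ i, ⟪(fderiv ℝ (gradient φ) x) (EuclideanSpace.single i 1), EuclideanSpace.single i (1:ℝ)⟫_ℝ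

/-- The second-order expression `-|∇φ(x)|^{p-2} Δφ(x) - (p-2)|∇φ(x)|^{p-4} Δ∞φ(x)` appearing
in the viscosity formulation of `-Δ_p`, interpreted as `0` when `∇φ(x) = 0`. -/
noncomputable def pLapOp {n : ℕ} (p : ℝ) (φ : EuclideanSpace ℝ (Fin n) → ℝ)
    (x : EuclideanSpace ℝ (Fin n)) : ℝ :=
  letI := Classical.propDecidable (gradient φ x = 0)
  if gradient φ x = 0 then 0
  else -(‖gradient φ x‖ ^ (p - 2) * lapl φ x)
        - (p - 2) * ‖gradient φ x‖ ^ (p - 4) * infLap φ x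

/-- Viscosity supersolution of `-Δ_p u = λ|u|^{p-2}u` in `Ω`. -/
def IsViscSupersolPLap {n : ℕ} (p lam : ℝ) (Ω : Set (EuclideanSpace ℝ (Fin n)))
    (u : EuclideanSpace ℝ (Fin n) → ℝ) : Prop :=
  ∀ x₀ ∈ Ω, ∀ φ : EuclideanSpace ℝ (Fin n) → ℝ, ContDiffAt ℝ 2 φ x₀ → φ x₀ = u x₀ →
    IsLocalMinOn (fun x => u x - φ x) Ω x₀ →
    0 ≤ pLapOp p φ x₀ - lam * |φ x₀| ^ (p - 2) * φ x₀

/-- Viscosity subsolution of `-Δ_p u = λ|u|^{p-2}u` in `Ω`. -/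
def IsViscSubsolPLap {n : ℕ} (p lam : ℝ) (Ω : Set (EuclideanSpace ℝ (Fin n)))
    (u : EuclideanSpace ℝ (Fin n) → ℝ) : Prop :=
  ∀ x₀ ∈ Ω, ∀ φ : EuclideanSpace ℝ (Fin n) → ℝ, ContDiffAt ℝ 2 φ x₀ → φ x₀ = u x₀ →
    IsLocalMaxOn (fun x => u x - φ x) Ω x₀ →
    pLapOp p φ x₀ - lam * |φ x₀| ^ (p - 2) * φ x₀ ≤ 0

/-- Viscosity solution of `-Δ_p u = λ|u|^{p-2}u` in `Ω`. -/
def IsViscSolPLap {n : ℕ} (p lam : ℝ) (Ω : Set (EuclideanSpace ℝ (Fin n)))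
    (u : EuclideanSpace ℝ (Fin n) → ℝ) : Prop :=
  IsViscSupersolPLap p lam Ω u ∧ IsViscSubsolPLap p lam Ω u

/-- Viscosity supersolution of `-min{|∇u| - βu, Δ∞u} = 0` in `Ω`. -/
def IsViscSupersolEig {n : ℕ} (β : ℝ) (Ω : Set (EuclideanSpace ℝ (Fin n)))
    (u : EuclideanSpace ℝ (Fin n) → ℝ) : Prop :=
  ∀ x₀ ∈ Ω, ∀ φ : EuclideanSpace ℝ (Fin n) → ℝ, ContDiffAt ℝ 2 φ x₀ → φ x₀ = u x₀ →
    IsLocalMinOn (fun x => u x - φ x) Ω x₀ →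
    min (‖gradient φ x₀‖ - β * φ x₀) (infLap φ x₀) ≤ 0

/-- Viscosity subsolution of `-min{|∇u| - βu, Δ∞u} = 0` in `Ω`. -/
def IsViscSubsolEig {n : ℕ} (β : ℝ) (Ω : Set (EuclideanSpace ℝ (Fin n)))
    (u : EuclideanSpace ℝ (Fin n) → ℝ) : Prop :=
  ∀ x₀ ∈ Ω, ∀ φ : EuclideanSpace ℝ (Fin n) → ℝ, ContDiffAt ℝ 2 φ x₀ → φ x₀ = u x₀ →
    IsLocalMaxOn (fun x => u x - φ x) Ω x₀ →
    0 ≤ min (‖gradient φ x₀‖ - β * φ x₀) (infLap φ x₀)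

/-- Viscosity solution of `-min{|∇u| - βu, Δ∞u} = 0` in `Ω`. -/
def IsViscSolEig {n : ℕ} (β : ℝ) (Ω : Set (EuclideanSpace ℝ (Fin n)))
    (u : EuclideanSpace ℝ (Fin n) → ℝ) : Prop :=
  IsViscSupersolEig β Ω u ∧ IsViscSubsolEig β Ω u

variable {n : ℕ}

local notation "E" => EuclideanSpace ℝ (Fin n)


lemma aux_ev_contDiffAt {f : E → ℝ} {x₀ : E} (hf : ContDiffAt ℝ 2 f x₀) :
    ∀ᶠ y in 𝓝 x₀, ContDiffAt ℝ 2 f y := hf.eventually (by norm_num)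

lemma aux_gradient_contDiffAt {f : E → ℝ} {x₀ : E} (hf : ContDiffAt ℝ 2 f x₀) :
    ContDiffAt ℝ 1 (gradient f) x₀ := by
  have h1 : ContDiffAt ℝ 1 (fderiv ℝ f) x₀ := hf.fderiv_right (by norm_num)
  exact ((InnerProductSpace.toDual ℝ E).symm.contDiff.contDiffAt).comp x₀ h1

lemma aux_gradient_continuousAt {f : E → ℝ} {x₀ : E} (hf : ContDiffAt ℝ 2 f x₀) :
    ContinuousAt (gradient f) x₀ := (aux_gradient_contDiffAt hf).continuousAt

lemma aux_fderiv_gradient_continuousAt {f : E → ℝ} {x₀ : E} (hf : ContDiffAt ℝ 2 f x₀) :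
    ContinuousAt (fderiv ℝ (gradient f)) x₀ :=
  ((aux_gradient_contDiffAt hf).fderiv_right (m := 0) (by norm_num)).continuousAt

lemma aux_infLap_continuousAt {f : E → ℝ} {x₀ : E} (hf : ContDiffAt ℝ 2 f x₀) :
    ContinuousAt (infLap f) x₀ := by
  have hg := aux_gradient_continuousAt hf
  have hH := aux_fderiv_gradient_continuousAt hf
  have happ : ContinuousAt (fun y => (fderiv ℝ (gradient f) y) (gradient f y)) x₀ :=
    by have := isBoundedBilinearMap_apply.continuous.continuousAt.comp (hH.prodMk hg); exact this
  exact happ.inner hg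

lemma aux_lapl_continuousAt {f : E → ℝ} {x₀ : E} (hf : ContDiffAt ℝ 2 f x₀) :
    ContinuousAt (lapl f) x₀ := by
  have hH := aux_fderiv_gradient_continuousAt hf
  refine tendsto_finset_sum _ fun i _ => ?_
  have happ : ContinuousAt (fun y => (fderiv ℝ (gradient f) y) (EuclideanSpace.single i (1:ℝ))) x₀ :=
    by have := isBoundedBilinearMap_apply.continuous.continuousAt.comp (hH.prodMk (continuousAt_const (y := EuclideanSpace.single i (1:ℝ)))); exact this
  exact happ.inner continuousAt_const

lemma quartic_contDiff (x₀ : E) : ContDiff ℝ 2 (fun y : E => ‖y - x₀‖^4) := by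
  have h : (fun y : E => ‖y - x₀‖^4) = fun y : E => (‖y - x₀‖^2)^2 := by
    funext y; ring
  rw [h]
  exact ((contDiff_norm_sq ℝ).comp (contDiff_id.sub contDiff_const)).pow 2

lemma quartic_hasGradientAt (x₀ x : E) :
    HasGradientAt (fun y : E => ‖y - x₀‖^4) ((4*‖x - x₀‖^2) • (x - x₀)) x := by
  rw [hasGradientAt_iff_hasFDerivAt]
  have hv : HasFDerivAt (fun y : E => y - x₀) (ContinuousLinearMap.id ℝ _) x :=
    (hasFDerivAt_id x).sub_const x₀
  have hN := hv.inner ℝ hv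
  have hq := hN.mul hN
  have hEq : (fun y : E => ⟪y - x₀, y - x₀⟫_ℝ * ⟪y - x₀, y - x₀⟫_ℝ) = fun y : E => ‖y - x₀‖^4 := by
    funext y
    rw [real_inner_self_eq_norm_sq]; ring
  change HasFDerivAt (fun y : E => ⟪y - x₀, y - x₀⟫_ℝ * ⟪y - x₀, y - x₀⟫_ℝ) _ x at hq
  rw [hEq] at hq
  refine hq.congr_fderiv ?_
  ext w
  simp only [ContinuousLinearMap.add_apply, ContinuousLinearMap.coe_smul', Pi.smul_apply,
    ContinuousLinearMap.coe_comp', Function.comp_apply, ContinuousLinearMap.prod_apply,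
    ContinuousLinearMap.coe_id', id_eq, fderivInnerCLM_apply, InnerProductSpace.toDual_apply_apply,
    real_inner_smul_left, smul_eq_mul]
  rw [real_inner_comm w (x - x₀), real_inner_self_eq_norm_sq]
  ring

lemma quartic_gradient (x₀ : E) :
    gradient (fun y : E => ‖y - x₀‖^4) = fun x => (4*‖x - x₀‖^2) • (x - x₀) :=
  gradient_eq (fun x => quartic_hasGradientAt x₀ x)

lemma quartic_gradient_x₀ (x₀ : E) : gradient (fun y : E => ‖y - x₀‖^4) x₀ = 0 := by
  rw [quartic_gradient]; simp

lemma quartic_fderiv_gradient_x₀ (x₀ : E) :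
    fderiv ℝ (gradient (fun y : E => ‖y - x₀‖^4)) x₀ = 0 := by
  rw [quartic_gradient]
  have hc : DifferentiableAt ℝ (fun x : E => 4*‖x - x₀‖^2) x₀ := by
    apply DifferentiableAt.const_mul
    exact ((contDiff_norm_sq ℝ).comp (contDiff_id.sub contDiff_const)).differentiable one_ne_zero
      |>.differentiableAt
  have hv : HasFDerivAt (fun x : E => x - x₀) (ContinuousLinearMap.id ℝ _) x₀ :=
    (hasFDerivAt_id x₀).sub_const x₀
  have hG := hc.hasFDerivAt.smul hv
  have : (4*‖x₀ - x₀‖^2 : ℝ) • (ContinuousLinearMap.id ℝ _) +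
      (fderiv ℝ (fun x : E => 4*‖x - x₀‖^2) x₀).smulRight (x₀ - x₀) = 0 := by
    ext w; simp
  rw [this] at hG
  exact hG.fderiv

lemma psi_contDiffAt {φ : E → ℝ} {x₀ : E} (hφ : ContDiffAt ℝ 2 φ x₀) (s : ℝ) :
    ContDiffAt ℝ 2 (fun y => φ y + s * ‖y - x₀‖^4) x₀ :=
  hφ.add ((contDiff_const.mul (quartic_contDiff x₀)).contDiffAt)

lemma psi_gradient_eventually {φ : E → ℝ} {x₀ : E} (hφ : ContDiffAt ℝ 2 φ x₀) (s : ℝ) :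
    gradient (fun y => φ y + s * ‖y - x₀‖^4) =ᶠ[𝓝 x₀]
      fun y => gradient φ y + s • ((4*‖y - x₀‖^2) • (y - x₀)) := by
  filter_upwards [aux_ev_contDiffAt hφ] with y hy
  have h1 : HasFDerivAt φ (fderiv ℝ φ y) y := (hy.differentiableAt two_ne_zero).hasFDerivAt
  have h2 := (quartic_hasGradientAt x₀ y).hasFDerivAt
  have h3 : HasFDerivAt (fun z => φ z + s * ‖z - x₀‖^4)
      (fderiv ℝ φ y + s • (InnerProductSpace.toDual ℝ _ ((4*‖y - x₀‖^2) • (y - x₀)))) y :=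
    h1.add (h2.const_mul s)
  show gradient _ y = _
  unfold gradient
  rw [h3.fderiv, map_add, map_smul, LinearIsometryEquiv.symm_apply_apply]

lemma psi_gradient_x₀ {φ : E → ℝ} {x₀ : E} (hφ : ContDiffAt ℝ 2 φ x₀) (s : ℝ) :
    gradient (fun y => φ y + s * ‖y - x₀‖^4) x₀ = gradient φ x₀ := by
  have := (psi_gradient_eventually hφ s).self_of_nhds
  simpa using this

lemma psi_fderiv_gradient_x₀ {φ : E → ℝ} {x₀ : E} (hφ : ContDiffAt ℝ 2 φ x₀) (s : ℝ) :
    fderiv ℝ (gradient (fun y => φ y + s * ‖y - x₀‖^4)) x₀ = fderiv ℝ (gradient φ) x₀ := by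
  rw [Filter.EventuallyEq.fderiv_eq (psi_gradient_eventually hφ s)]
  have hG : (fun y : E => (4*‖y - x₀‖^2) • (y - x₀)) = gradient (fun y : E => ‖y - x₀‖^4) :=
    (quartic_gradient x₀).symm
  have hd1 : DifferentiableAt ℝ (gradient φ) x₀ :=
    (aux_gradient_contDiffAt hφ).differentiableAt one_ne_zero
  have hd2 : DifferentiableAt ℝ (fun y : E => (4*‖y - x₀‖^2) • (y - x₀)) x₀ := by
    rw [hG]
    exact (aux_gradient_contDiffAt ((quartic_contDiff x₀).contDiffAt)).differentiableAt one_ne_zero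
  rw [fderiv_fun_add (g := fun y : E => s • ((4*‖y - x₀‖^2) • (y - x₀))) hd1 (hd2.const_smul s), fderiv_fun_const_smul hd2]
  have : fderiv ℝ (fun y : E => (4*‖y - x₀‖^2) • (y - x₀)) x₀ = 0 := by
    rw [hG]; exact quartic_fderiv_gradient_x₀ x₀
  rw [this]
  simp

lemma psi_infLap_x₀ {φ : E → ℝ} {x₀ : E} (hφ : ContDiffAt ℝ 2 φ x₀) (s : ℝ) :
    infLap (fun y => φ y + s * ‖y - x₀‖^4) x₀ = infLap φ x₀ := by
  unfold infLap
  rw [psi_gradient_x₀ hφ s, psi_fderiv_gradient_x₀ hφ s]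

lemma psi_lapl_x₀ {φ : E → ℝ} {x₀ : E} (hφ : ContDiffAt ℝ 2 φ x₀) (s : ℝ) :
    lapl (fun y => φ y + s * ‖y - x₀‖^4) x₀ = lapl φ x₀ := by
  unfold lapl
  rw [psi_fderiv_gradient_x₀ hφ s]

lemma gradient_add_const (f : E → ℝ) (c : ℝ) :
    gradient (fun x => f x + c) = gradient f := by
  funext x
  unfold gradient
  rw [fderiv_add_const]

lemma pLapOp_add_const (p : ℝ) (f : E → ℝ) (c : ℝ) (x : E) :
    pLapOp p (fun y => f y + c) x = pLapOp p f x := by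
  unfold pLapOp infLap lapl
  rw [gradient_add_const]

lemma pLapOp_of_ne (p : ℝ) (f : E → ℝ) (x : E) (h : gradient f x ≠ 0) :
    pLapOp p f x = -(‖gradient f x‖ ^ (p - 2) * lapl f x)
        - (p - 2) * ‖gradient f x‖ ^ (p - 4) * infLap f x := by
  unfold pLapOp
  simp [h]

lemma pLapOp_of_eq (p : ℝ) (f : E → ℝ) (x : E) (h : gradient f x = 0) :
    pLapOp p f x = 0 := by
  unfold pLapOp
  simp [h]

lemma touch_min {Ω : Set (EuclideanSpace ℝ (Fin n))} (hΩ : IsOpen Ω)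
    {uj : ℕ → E → ℝ} {u : E → ℝ}
    (hujc : ∀ j, ContinuousOn (uj j) Ω) (hu : ContinuousOn u Ω)
    (hconv : TendstoLocallyUniformlyOn uj u atTop Ω)
    {x₀ : E} (hx₀ : x₀ ∈ Ω) {ψ : E → ℝ}
    (hψ : ∀ᶠ y in 𝓝 x₀, ContinuousAt ψ y)
    (hmin : ∀ᶠ y in 𝓝 x₀, u x₀ - ψ x₀ + ‖y - x₀‖^4 ≤ u y - ψ y) :
    ∃ x : ℕ → E, Tendsto x atTop (𝓝 x₀) ∧ (∀ j, x j ∈ Ω) ∧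
      (∀ᶠ j in atTop, IsLocalMinOn (fun y => uj j y - ψ y) Ω (x j)) ∧
      Tendsto (fun j => uj j (x j)) atTop (𝓝 (u x₀)) := by
  have hev : ∀ᶠ y in 𝓝 x₀, y ∈ Ω ∧ ContinuousAt ψ y ∧
      (u x₀ - ψ x₀ + ‖y - x₀‖^4 ≤ u y - ψ y) :=
    (hΩ.eventually_mem hx₀).and (hψ.and hmin)
  obtain ⟨r, hr0, hK⟩ := Metric.nhds_basis_closedBall.eventually_iff.mp hev
  set K := Metric.closedBall x₀ r with hKdef
  have hKc : IsCompact K := isCompact_closedBall x₀ r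
  have hKΩ : K ⊆ Ω := fun y hy => (hK hy).1
  have hx₀K : x₀ ∈ K := Metric.mem_closedBall_self hr0.le
  have hunif : TendstoUniformlyOn uj u atTop K :=
    (tendstoLocallyUniformlyOn_iff_tendstoUniformlyOn_of_compact hKc).mp (hconv.mono hKΩ)
  have hex : ∀ j, ∃ z ∈ K, IsMinOn (fun y => uj j y - ψ y) K z := by
    intro j
    apply hKc.exists_isMinOn ⟨x₀, hx₀K⟩
    exact ((hujc j).mono hKΩ).sub (fun y hy => ((hK hy).2.1).continuousWithinAt)
  choose x hxK hxmin using hex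
  have htend : Tendsto x atTop (𝓝 x₀) := by
    rw [Metric.tendsto_nhds]
    intro ε hε
    have hε' : 0 < min ε r := lt_min hε hr0
    set ε' := min ε r with hε'def
    have hδ : (0:ℝ) < ε'^4/3 := by positivity
    filter_upwards [Metric.tendstoUniformlyOn_iff.mp hunif (ε'^4/3) hδ] with j hj
    rcases lt_or_ge (dist (x j) x₀) ε' with h | h
    · exact h.trans_le (min_le_left _ _)
    · exfalso
      have hnorm : ε' ≤ ‖x j - x₀‖ := by rwa [dist_eq_norm] at h
      have hpow : ε'^4 ≤ ‖x j - x₀‖^4 := pow_le_pow_left₀ hε'.le hnorm 4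
      have h1 := (hK (hxK j)).2.2
      have h2 : |u (x j) - uj j (x j)| < ε'^4/3 := by
        have := hj _ (hxK j); rwa [Real.dist_eq] at this
      have h3 : |u x₀ - uj j x₀| < ε'^4/3 := by
        have := hj _ hx₀K; rwa [Real.dist_eq] at this
      have h4 : uj j (x j) - ψ (x j) ≤ uj j x₀ - ψ x₀ := hxmin j hx₀K
      rw [abs_lt] at h2 h3
      linarith [h2.1, h2.2, h3.1, h3.2]
  have hball : ∀ᶠ j in atTop, x j ∈ Metric.ball x₀ r :=
    htend.eventually_mem (Metric.ball_mem_nhds x₀ hr0)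
  refine ⟨x, htend, fun j => hKΩ (hxK j), ?_, ?_⟩
  · filter_upwards [hball] with j hj
    have hmem : Metric.ball x₀ r ∈ 𝓝[Ω] (x j) :=
      nhdsWithin_le_nhds (Metric.isOpen_ball.mem_nhds hj)
    show ∀ᶠ y in 𝓝[Ω] (x j), _ ≤ _
    filter_upwards [hmem] with y hy
    exact hxmin j (Metric.ball_subset_closedBall hy)
  · refine hunif.tendsto_comp (hu.continuousWithinAt hx₀ |>.mono hKΩ) ?_
    rw [tendsto_nhdsWithin_iff]
    exact ⟨htend, Filter.Eventually.of_forall hxK⟩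

lemma T1 {r : ℝ} (h0 : 0 < r) (h1 : r < 1) :
    Tendsto (fun x : ℝ => r ^ x) atTop (𝓝 0) :=
  tendsto_rpow_atTop_of_base_lt_one r (by linarith) h1

lemma T2 {r : ℝ} (h0 : 0 < r) (h1 : r < 1) :
    Tendsto (fun x : ℝ => x * r ^ x) atTop (𝓝 0) := by
  have hlog : Real.log r < 0 := Real.log_neg h0 h1
  set a : ℝ := -Real.log r with ha
  have ha0 : 0 < a := by simp [ha]; linarith
  have hcomp : Tendsto (fun x : ℝ => a * x) atTop atTop :=
    Tendsto.const_mul_atTop ha0 tendsto_id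
  have h := (Real.tendsto_pow_mul_exp_neg_atTop_nhds_zero 1).comp hcomp
  have h2 := h.const_mul (1/a)
  rw [mul_zero] at h2
  convert h2 using 2 with x
  show x * r ^ x = 1/a * ((a*x)^1 * Real.exp (-(a*x)))
  have hr : r ^ x = Real.exp (-(a*x)) := by
    rw [Real.rpow_def_of_pos h0]
    congr 1
    simp [ha]
  rw [hr]
  field_simp

lemma rpow_split (g : ℝ) (hg : 0 < g) (a : ℝ) (k : ℕ) :
    g ^ a = g ^ (a - (k:ℝ)) * g ^ k := by
  rw [← Real.rpow_natCast g k, ← Real.rpow_add hg]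
  ring_nf

lemma super_alg {pp g v I L lamj : ℝ} (hpp : 4 < pp) (hg : 0 < g) (hv : 0 < v)
    (hlam : lamj < 0) (hmu : (-lamj) ^ (1/pp) * v ≤ g)
    (hineq : 0 ≤ -(g ^ (pp - 2) * L) - (pp - 2) * g ^ (pp - 4) * I
      - lamj * v ^ (pp - 2) * v) :
    I ≤ g ^ 4 / (v * (pp - 2)) - g ^ 2 * L / (pp - 2) := by
  have hpp0 : 0 < pp := by linarith
  have hpp2 : 0 < pp - 2 := by linarith
  have hlam0 : (0:ℝ) ≤ -lamj := by linarith
  set A : ℝ := g ^ (pp - 4) with hAdef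
  have hA : 0 < A := Real.rpow_pos_of_pos hg _
  have h5 : g ^ pp = A * g ^ (4:ℕ) := rpow_split g hg pp 4
  have h6 : g ^ (pp - 2) = A * g ^ (2:ℕ) := by
    rw [rpow_split g hg (pp - 2) 2, hAdef]
    congr 2
    push_cast; ring
  have hμv0 : 0 ≤ (-lamj) ^ (1/pp) * v := mul_nonneg (Real.rpow_nonneg hlam0 _) hv.le
  have h1 : ((-lamj) ^ (1/pp) * v) ^ pp ≤ g ^ pp := Real.rpow_le_rpow hμv0 hmu hpp0.le
  have h2 : ((-lamj) ^ (1/pp) * v) ^ pp = (-lamj) * v ^ pp := by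
    rw [Real.mul_rpow (Real.rpow_nonneg hlam0 _) hv.le,
      ← Real.rpow_mul hlam0, one_div_mul_cancel hpp0.ne', Real.rpow_one]
  have hvp : v ^ pp = v ^ (pp - 2) * (v * v) := by
    rw [rpow_split v hv pp 2, pow_two]; ring
  have h4 : (-lamj) * (v ^ (pp - 2) * (v * v)) ≤ A * g ^ (4:ℕ) := by
    rw [← hvp, ← h5, ← h2]; exact h1
  rw [h6] at hineq
  have hineqv := mul_le_mul_of_nonneg_right hineq hv.le
  have h8 : A * ((pp - 2) * (I * v)) ≤ A * (g ^ (4:ℕ) - g ^ (2:ℕ) * L * v) := by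
    nlinarith [h4, hineqv]
  have h9 : (pp - 2) * (I * v) ≤ g ^ (4:ℕ) - g ^ (2:ℕ) * L * v :=
    le_of_mul_le_mul_left h8 hA
  have h10 : I ≤ (g ^ (4:ℕ) - g ^ (2:ℕ) * L * v) / (v * (pp - 2)) := by
    rw [le_div_iff₀ (by positivity)]
    linarith
  have h11 : (g ^ (4:ℕ) - g ^ (2:ℕ) * L * v) / (v * (pp - 2))
      = g ^ (4:ℕ) / (v * (pp - 2)) - g ^ (2:ℕ) * L / (pp - 2) := by
    field_simp
  linarith

lemma subA_alg {pp g v I L lamj c2 c3 : ℝ} (hpp : 4 < pp) (hg : 0 < g) (hv : 0 < v)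
    (hlam : lamj < 0) (hgc : g ≤ c2) (hc3 : 0 < c3) (hc : c3 ≤ (-lamj) ^ (1/pp) * v)
    (hineq : -(g ^ (pp - 2) * L) - (pp - 2) * g ^ (pp - 4) * I
      - lamj * v ^ (pp - 2) * v ≤ 0) :
    1 ≤ v * ((c2 / c3) ^ (pp - 4)) * (c2 ^ 2 * |L| + (pp - 2) * |I|) / c3 ^ 4 := by
  have hpp0 : 0 < pp := by linarith
  have hpp2 : 0 < pp - 2 := by linarith
  have hpp4 : (0:ℝ) ≤ pp - 4 := by linarith
  have hlam0 : (0:ℝ) ≤ -lamj := by linarith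
  have hc2 : 0 < c2 := hg.trans_le hgc
  set A : ℝ := g ^ (pp - 4) with hAdef
  set A2 : ℝ := c2 ^ (pp - 4) with hA2def
  have hA : 0 < A := Real.rpow_pos_of_pos hg _
  have hA2 : A ≤ A2 := Real.rpow_le_rpow hg.le hgc hpp4
  have hA2pos : 0 < A2 := Real.rpow_pos_of_pos hc2 _
  have h6 : g ^ (pp - 2) = A * g ^ (2:ℕ) := by
    rw [rpow_split g hg (pp - 2) 2, hAdef]
    congr 2
    push_cast; ring
  have h2 : ((-lamj) ^ (1/pp) * v) ^ pp = (-lamj) * v ^ pp := by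
    rw [Real.mul_rpow (Real.rpow_nonneg hlam0 _) hv.le,
      ← Real.rpow_mul hlam0, one_div_mul_cancel hpp0.ne', Real.rpow_one]
  have hvp : v ^ pp = v ^ (pp - 2) * (v * v) := by
    rw [rpow_split v hv pp 2, pow_two]; ring
  set Q : ℝ := c2 ^ 2 * |L| + (pp - 2) * |I| with hQdef
  have hQ0 : 0 ≤ Q := by positivity
  have step1 : c3 ^ pp ≤ (-lamj) * v ^ pp := by
    rw [← h2]; exact Real.rpow_le_rpow hc3.le hc hpp0.le
  have step3 : (-lamj) * v ^ (pp - 2) * v ≤ A * (g ^ (2:ℕ) * L + (pp - 2) * I) := by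
    rw [h6] at hineq
    nlinarith [hineq]
  have inner : g ^ (2:ℕ) * L + (pp - 2) * I ≤ Q := by
    have hgl : g ^ (2:ℕ) * L ≤ c2 ^ 2 * |L| := by
      calc g ^ (2:ℕ) * L ≤ g ^ (2:ℕ) * |L| :=
            mul_le_mul_of_nonneg_left (le_abs_self L) (by positivity)
      _ ≤ c2 ^ 2 * |L| := by
            apply mul_le_mul_of_nonneg_right _ (abs_nonneg L)
            exact pow_le_pow_left₀ hg.le hgc 2
    have hil : (pp - 2) * I ≤ (pp - 2) * |I| :=
      mul_le_mul_of_nonneg_left (le_abs_self I) hpp2.le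
    rw [hQdef]; linarith
  have step4 : A * (g ^ (2:ℕ) * L + (pp - 2) * I) ≤ A2 * Q := by
    calc A * (g ^ (2:ℕ) * L + (pp - 2) * I) ≤ A * Q :=
          mul_le_mul_of_nonneg_left inner hA.le
    _ ≤ A2 * Q := mul_le_mul_of_nonneg_right hA2 hQ0
  have hmain : c3 ^ pp ≤ v * A2 * Q := by
    have h7 : (-lamj) * v ^ pp = ((-lamj) * v ^ (pp - 2) * v) * v := by rw [hvp]; ring
    have h8 : ((-lamj) * v ^ (pp - 2) * v) * v ≤ (A2 * Q) * v :=
      mul_le_mul_of_nonneg_right (step3.trans step4) hv.le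
    calc c3 ^ pp ≤ (-lamj) * v ^ pp := step1
    _ = ((-lamj) * v ^ (pp - 2) * v) * v := h7
    _ ≤ (A2 * Q) * v := h8
    _ = v * A2 * Q := by ring
  have hc3p : c3 ^ pp = c3 ^ (pp - 4) * c3 ^ (4:ℕ) := rpow_split c3 hc3 pp 4
  have hdiv : (c2 / c3) ^ (pp - 4) = A2 / c3 ^ (pp - 4) :=
    Real.div_rpow hc2.le hc3.le _
  have hB : (0:ℝ) < c3 ^ (pp - 4) := Real.rpow_pos_of_pos hc3 _
  rw [hdiv]
  have hre : v * (A2 / c3 ^ (pp - 4)) * Q / c3 ^ 4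
      = v * A2 * Q / (c3 ^ (pp - 4) * c3 ^ (4:ℕ)) := by
    field_simp
  rw [hre, le_div_iff₀ (by positivity), one_mul, ← hc3p]
  exact hmain

lemma subB_alg {pp g v I L lamj : ℝ} (hpp : 4 < pp) (hg : 0 < g) (hv : 0 < v)
    (hlam : lamj < 0)
    (hineq : -(g ^ (pp - 2) * L) - (pp - 2) * g ^ (pp - 4) * I
      - lamj * v ^ (pp - 2) * v ≤ 0) :
    (pp - 2) * (-I) < g ^ 2 * L := by
  have hpp2 : 0 < pp - 2 := by linarith
  set A : ℝ := g ^ (pp - 4) with hAdef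
  have hA : 0 < A := Real.rpow_pos_of_pos hg _
  have h6 : g ^ (pp - 2) = A * g ^ (2:ℕ) := by
    rw [rpow_split g hg (pp - 2) 2, hAdef]
    congr 2
    push_cast; ring
  rw [h6] at hineq
  have hpos : 0 < (-lamj) * v ^ (pp - 2) * v :=
    mul_pos (mul_pos (by linarith) (Real.rpow_pos_of_pos hv _)) hv
  have h7 : 0 < A * (g ^ (2:ℕ) * L + (pp - 2) * I) := by nlinarith [hineq, hpos]
  have h8 : 0 < g ^ (2:ℕ) * L + (pp - 2) * I := by
    by_contra h
    push_neg at h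
    nlinarith [h7, hA, h]
  linarith

lemma tlun_neg {F : ℕ → E → ℝ} {f : E → ℝ} {s : Set (EuclideanSpace ℝ (Fin n))}
    (h : TendstoLocallyUniformlyOn F f atTop s) :
    TendstoLocallyUniformlyOn (fun j y => -(F j y)) (fun y => -(f y)) atTop s := by
  rw [Metric.tendstoLocallyUniformlyOn_iff] at h ⊢
  intro ε hε x hx
  obtain ⟨t, ht, hev⟩ := h ε hε x hx
  exact ⟨t, ht, hev.mono fun m hm y hy => by simpa [dist_neg_neg] using hm y hy⟩

/-- a locally uniform limit of positive viscosity solutions of the `p_j`-Laplacian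
eigenvalue equations, with `(-λ_j)^{1/p_j} → β`, is a viscosity solution of
`-min{|∇u| - βu, Δ∞u} = 0` in `Ω`. -/
theorem limit_is_viscosity_solution_infinity_eigenvalue {n : ℕ}
    (Ω : Set (EuclideanSpace ℝ (Fin n))) (hΩ : IsOpen Ω) (β : ℝ) (hβ : 0 < β)
    (p lam : ℕ → ℝ) (hp : ∀ j, 4 < p j) (hptop : Tendsto p atTop atTop)
    (hlam : ∀ j, lam j < 0)
    (hlim : Tendsto (fun j => (-lam j) ^ (1 / p j)) atTop (𝓝 β))
    (uj : ℕ → EuclideanSpace ℝ (Fin n) → ℝ)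
    (hujc : ∀ j, ContinuousOn (uj j) Ω) (hujpos : ∀ j, ∀ x ∈ Ω, 0 < uj j x)
    (hsol : ∀ j, IsViscSolPLap (p j) (lam j) Ω (uj j))
    (u : EuclideanSpace ℝ (Fin n) → ℝ) (hu : ContinuousOn u Ω) (hupos : ∀ x ∈ Ω, 0 < u x)
    (hconv : TendstoLocallyUniformlyOn uj u atTop Ω) :
    IsViscSolEig β Ω u := by
  constructor
  · -- supersolution
    intro x₀ hx₀ φ hφ hφeq hmin
    by_contra hcon
    push_neg at hcon
    rw [lt_min_iff] at hcon
    obtain ⟨hA, hB⟩ := hcon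
    set G := ‖gradient φ x₀‖ with hGdef
    have hV : 0 < u x₀ := hupos x₀ hx₀
    have hβV : 0 < β * u x₀ := mul_pos hβ hV
    have hGV : β * u x₀ < G := by rw [hφeq] at hA; linarith
    have hG : 0 < G := lt_trans hβV hGV
    set ψ : EuclideanSpace ℝ (Fin n) → ℝ := fun y => φ y + (-1) * ‖y - x₀‖^4 with hψdef
    have hψc2 : ContDiffAt ℝ 2 ψ x₀ := psi_contDiffAt hφ (-1)
    have hψev : ∀ᶠ y in 𝓝 x₀, ContinuousAt ψ y :=
      (aux_ev_contDiffAt hψc2).mono fun y hy => hy.continuousAt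
    have hminn : ∀ᶠ y in 𝓝 x₀, u x₀ - φ x₀ ≤ u y - φ y :=
      hmin.filter_mono (le_of_eq (hΩ.nhdsWithin_eq hx₀).symm)
    have hmin' : ∀ᶠ y in 𝓝 x₀, u x₀ - ψ x₀ + ‖y - x₀‖^4 ≤ u y - ψ y := by
      filter_upwards [hminn] with y hy
      have h1 : ψ x₀ = φ x₀ := by simp [hψdef]
      have h2 : ψ y = φ y + (-1) * ‖y - x₀‖^4 := rfl
      rw [h1, h2]
      linarith
    obtain ⟨x, hxtend, hxΩ, hxmin, hxval⟩ := touch_min hΩ hujc hu hconv hx₀ hψev hmin'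
    have hgtend : Tendsto (fun j => gradient ψ (x j)) atTop (𝓝 (gradient φ x₀)) := by
      have h := (aux_gradient_continuousAt hψc2).tendsto.comp hxtend
      rwa [psi_gradient_x₀ hφ (-1)] at h
    have hgn : Tendsto (fun j => ‖gradient ψ (x j)‖) atTop (𝓝 G) := hgtend.norm
    have hItend : Tendsto (fun j => infLap ψ (x j)) atTop (𝓝 (infLap φ x₀)) := by
      have h := (aux_infLap_continuousAt hψc2).tendsto.comp hxtend
      rwa [psi_infLap_x₀ hφ (-1)] at h
    have hLtend : Tendsto (fun j => lapl ψ (x j)) atTop (𝓝 (lapl φ x₀)) := by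
      have h := (aux_lapl_continuousAt hψc2).tendsto.comp hxtend
      rwa [psi_lapl_x₀ hφ (-1)] at h
    have hμv : Tendsto (fun j => (-lam j) ^ (1/p j) * uj j (x j)) atTop (𝓝 (β * u x₀)) :=
      hlim.mul hxval
    have E3 : ∀ᶠ j in atTop, ContDiffAt ℝ 2 ψ (x j) := hxtend.eventually (aux_ev_contDiffAt hψc2)
    have E4 : ∀ᶠ j in atTop, 0 < ‖gradient ψ (x j)‖ := hgn.eventually (eventually_gt_nhds hG)
    have E5 : ∀ᶠ j in atTop, (-lam j) ^ (1/p j) * uj j (x j) ≤ ‖gradient ψ (x j)‖ := by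
      have hsub : Tendsto (fun j => ‖gradient ψ (x j)‖ - (-lam j) ^ (1/p j) * uj j (x j))
          atTop (𝓝 (G - β * u x₀)) := hgn.sub hμv
      filter_upwards [hsub.eventually (eventually_gt_nhds (by linarith : (0:ℝ) < G - β * u x₀))]
        with j hj
      linarith
    have EKey : ∀ᶠ j in atTop, infLap ψ (x j) ≤
        ‖gradient ψ (x j)‖^4 / (uj j (x j) * (p j - 2))
          - ‖gradient ψ (x j)‖^2 * lapl ψ (x j) / (p j - 2) := by
      filter_upwards [hxmin, E3, E4, E5] with j hj1 hj3 hj4 hj5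
      have hvpos : 0 < uj j (x j) := hujpos j (x j) (hxΩ j)
      have hloc : IsLocalMinOn
          (fun y => uj j y - (ψ y + (uj j (x j) - ψ (x j)))) Ω (x j) := by
        show ∀ᶠ y in 𝓝[Ω] (x j), _ ≤ _
        have hj1' : ∀ᶠ y in 𝓝[Ω] (x j),
            uj j (x j) - ψ (x j) ≤ uj j y - ψ y := hj1
        filter_upwards [hj1'] with y hy
        beta_reduce
        linarith
      have hvis := (hsol j).1 (x j) (hxΩ j) (fun y => ψ y + (uj j (x j) - ψ (x j)))
        (hj3.add contDiffAt_const) (by simp) hloc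
      rw [pLapOp_add_const] at hvis
      simp only [show ψ (x j) + (uj j (x j) - ψ (x j)) = uj j (x j) by ring] at hvis
      rw [abs_of_pos hvpos] at hvis
      have hne : gradient ψ (x j) ≠ 0 := norm_pos_iff.mp hj4
      rw [pLapOp_of_ne _ _ _ hne] at hvis
      exact super_alg (hp j) hj4 hvpos (hlam j) hj5 (by linarith)
    have hp2top : Tendsto (fun j => p j - 2) atTop atTop := by
      simpa [sub_eq_add_neg] using tendsto_atTop_add_const_right atTop (-2 : ℝ) hptop
    have hinv : Tendsto (fun j => (p j - 2)⁻¹) atTop (𝓝 0) := hp2top.inv_tendsto_atTop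
    have hW : Tendsto (fun j => ‖gradient ψ (x j)‖^4 / (uj j (x j) * (p j - 2))
        - ‖gradient ψ (x j)‖^2 * lapl ψ (x j) / (p j - 2)) atTop (𝓝 0) := by
      have h1 : Tendsto (fun j => ‖gradient ψ (x j)‖^4 / uj j (x j) * (p j - 2)⁻¹)
          atTop (𝓝 (G^4 / u x₀ * 0)) := ((hgn.pow 4).div hxval hV.ne').mul hinv
      have h2 : Tendsto (fun j => ‖gradient ψ (x j)‖^2 * lapl ψ (x j) * (p j - 2)⁻¹)
          atTop (𝓝 (G^2 * lapl φ x₀ * 0)) := ((hgn.pow 2).mul hLtend).mul hinv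
      have h3 : Tendsto (fun j => ‖gradient ψ (x j)‖^4 / (uj j (x j) * (p j - 2))
          - ‖gradient ψ (x j)‖^2 * lapl ψ (x j) / (p j - 2)) atTop
          (𝓝 (G^4 / u x₀ * 0 - G^2 * lapl φ x₀ * 0)) :=
        (h1.sub h2).congr (fun j => by simp only [div_eq_mul_inv, mul_inv]; ring)
      simpa using h3
    have hfin : infLap φ x₀ ≤ 0 := le_of_tendsto_of_tendsto hItend hW EKey
    linarith
  · -- subsolution
    intro x₀ hx₀ φ hφ hφeq hmax
    set G := ‖gradient φ x₀‖ with hGdef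
    have hV : 0 < u x₀ := hupos x₀ hx₀
    have hβV : 0 < β * u x₀ := mul_pos hβ hV
    set ψ : EuclideanSpace ℝ (Fin n) → ℝ := fun y => φ y + 1 * ‖y - x₀‖^4 with hψdef
    have hψc2 : ContDiffAt ℝ 2 ψ x₀ := psi_contDiffAt hφ 1
    have hψev : ∀ᶠ y in 𝓝 x₀, ContinuousAt (fun y => -(ψ y)) y :=
      (aux_ev_contDiffAt hψc2).mono fun y hy => hy.continuousAt.neg
    have hmaxn : ∀ᶠ y in 𝓝 x₀, u y - φ y ≤ u x₀ - φ x₀ :=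
      hmax.filter_mono (le_of_eq (hΩ.nhdsWithin_eq hx₀).symm)
    have hmin' : ∀ᶠ y in 𝓝 x₀,
        (-(u x₀)) - (-(ψ x₀)) + ‖y - x₀‖^4 ≤ (-(u y)) - (-(ψ y)) := by
      filter_upwards [hmaxn] with y hy
      have h1 : ψ x₀ = φ x₀ := by simp [hψdef]
      have h2 : ψ y = φ y + 1 * ‖y - x₀‖^4 := rfl
      rw [h1, h2]
      linarith
    obtain ⟨x, hxtend, hxΩ, hxmin0, hxval0⟩ :=
      touch_min hΩ (uj := fun j y => -(uj j y)) (u := fun y => -(u y))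
        (fun j => (hujc j).neg) hu.neg (tlun_neg hconv) hx₀ hψev hmin'
    have hxval : Tendsto (fun j => uj j (x j)) atTop (𝓝 (u x₀)) := by
      have h := hxval0.neg
      simpa using h
    have hxmax : ∀ᶠ j in atTop, ∀ᶠ y in 𝓝[Ω] (x j),
        uj j y - ψ y ≤ uj j (x j) - ψ (x j) := by
      filter_upwards [hxmin0] with j hj
      have hj' : ∀ᶠ y in 𝓝[Ω] (x j),
          (-(uj j (x j))) - (-(ψ (x j))) ≤ (-(uj j y)) - (-(ψ y)) := hj
      filter_upwards [hj'] with y hy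
      linarith
    have hgtend : Tendsto (fun j => gradient ψ (x j)) atTop (𝓝 (gradient φ x₀)) := by
      have h := (aux_gradient_continuousAt hψc2).tendsto.comp hxtend
      rwa [psi_gradient_x₀ hφ 1] at h
    have hgn : Tendsto (fun j => ‖gradient ψ (x j)‖) atTop (𝓝 G) := hgtend.norm
    have hItend : Tendsto (fun j => infLap ψ (x j)) atTop (𝓝 (infLap φ x₀)) := by
      have h := (aux_infLap_continuousAt hψc2).tendsto.comp hxtend
      rwa [psi_infLap_x₀ hφ 1] at h
    have hLtend : Tendsto (fun j => lapl ψ (x j)) atTop (𝓝 (lapl φ x₀)) := by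
      have h := (aux_lapl_continuousAt hψc2).tendsto.comp hxtend
      rwa [psi_lapl_x₀ hφ 1] at h
    have hμv : Tendsto (fun j => (-lam j) ^ (1/p j) * uj j (x j)) atTop (𝓝 (β * u x₀)) :=
      hlim.mul hxval
    have E3 : ∀ᶠ j in atTop, ContDiffAt ℝ 2 ψ (x j) := hxtend.eventually (aux_ev_contDiffAt hψc2)
    -- the key eventual inequality from the viscosity subsolution property
    have EKey : ∀ᶠ j in atTop, gradient ψ (x j) ≠ 0 ∧
        -(‖gradient ψ (x j)‖ ^ (p j - 2) * lapl ψ (x j))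
          - (p j - 2) * ‖gradient ψ (x j)‖ ^ (p j - 4) * infLap ψ (x j)
          - lam j * (uj j (x j)) ^ (p j - 2) * uj j (x j) ≤ 0 := by
      filter_upwards [hxmax, E3] with j hj1 hj3
      have hvpos : 0 < uj j (x j) := hujpos j (x j) (hxΩ j)
      have hloc : IsLocalMaxOn
          (fun y => uj j y - (ψ y + (uj j (x j) - ψ (x j)))) Ω (x j) := by
        show ∀ᶠ y in 𝓝[Ω] (x j), _ ≤ _
        filter_upwards [hj1] with y hy
        beta_reduce
        linarith
      have hvis := (hsol j).2 (x j) (hxΩ j) (fun y => ψ y + (uj j (x j) - ψ (x j)))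
        (hj3.add contDiffAt_const) (by simp) hloc
      rw [pLapOp_add_const] at hvis
      simp only [show ψ (x j) + (uj j (x j) - ψ (x j)) = uj j (x j) by ring] at hvis
      rw [abs_of_pos hvpos] at hvis
      by_cases hgz : gradient ψ (x j) = 0
      · exfalso
        rw [pLapOp_of_eq _ _ _ hgz] at hvis
        have hpos : 0 < (-lam j) * (uj j (x j)) ^ (p j - 2) * uj j (x j) :=
          mul_pos (mul_pos (by linarith [hlam j]) (Real.rpow_pos_of_pos hvpos _)) hvpos
        nlinarith [hvis, hpos]
      · rw [pLapOp_of_ne _ _ _ hgz] at hvis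
        exact ⟨hgz, by linarith⟩
    have hp2top : Tendsto (fun j => p j - 2) atTop atTop := by
      simpa [sub_eq_add_neg] using tendsto_atTop_add_const_right atTop (-2 : ℝ) hptop
    have hp4top : Tendsto (fun j => p j - 4) atTop atTop := by
      simpa [sub_eq_add_neg] using tendsto_atTop_add_const_right atTop (-4 : ℝ) hptop
    -- Claim A : β * u x₀ ≤ G
    have hclaimA : β * u x₀ ≤ G := by
      by_contra hcon
      push_neg at hcon
      set c1 : ℝ := (G + β * u x₀)/2 with hc1def
      set c2 : ℝ := (G + c1)/2 with hc2def
      set c3 : ℝ := (c1 + β * u x₀)/2 with hc3def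
      have hGnn : 0 ≤ G := norm_nonneg _
      have hGc1 : G < c1 := by rw [hc1def]; linarith
      have hc1c3 : c1 < c3 := by rw [hc3def]; linarith
      have hGc2 : G < c2 := by rw [hc2def]; linarith
      have hc2c1 : c2 < c1 := by rw [hc2def]; linarith
      have hc3βV : c3 < β * u x₀ := by rw [hc3def]; linarith
      have hc2pos : 0 < c2 := by rw [hc2def]; linarith
      have hc3pos : 0 < c3 := by rw [hc3def]; linarith
      have hc2c3 : c2 < c3 := lt_trans hc2c1 hc1c3
      have Eg : ∀ᶠ j in atTop, ‖gradient ψ (x j)‖ ≤ c2 :=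
        hgn.eventually (eventually_le_nhds hGc2)
      have Eμ : ∀ᶠ j in atTop, c3 ≤ (-lam j) ^ (1/p j) * uj j (x j) :=
        hμv.eventually (eventually_ge_nhds hc3βV)
      have ET : ∀ᶠ j in atTop, 1 ≤ uj j (x j) * ((c2/c3) ^ (p j - 4))
          * (c2 ^ 2 * |lapl ψ (x j)| + (p j - 2) * |infLap ψ (x j)|) / c3 ^ 4 := by
        filter_upwards [EKey, Eg, Eμ] with j hj hjg hjμ
        have hvpos : 0 < uj j (x j) := hujpos j (x j) (hxΩ j)
        exact subA_alg (hp j) (norm_pos_iff.mpr hj.1) hvpos (hlam j) hjg hc3pos hjμ hj.2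
      have hr0 : 0 < c2/c3 := div_pos hc2pos hc3pos
      have hr1 : c2/c3 < 1 := (div_lt_one hc3pos).mpr hc2c3
      have hr4 : Tendsto (fun j => (c2/c3) ^ (p j - 4)) atTop (𝓝 0) :=
        (T1 hr0 hr1).comp hp4top
      have hr4' : Tendsto (fun j => (p j - 4) * (c2/c3) ^ (p j - 4)) atTop (𝓝 0) :=
        (T2 hr0 hr1).comp hp4top
      have hpr : Tendsto (fun j => (p j - 2) * (c2/c3) ^ (p j - 4)) atTop (𝓝 0) := by
        have h : Tendsto (fun j => (p j - 4) * (c2/c3) ^ (p j - 4)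
            + 2 * (c2/c3) ^ (p j - 4)) atTop (𝓝 (0 + 2*0)) := hr4'.add (hr4.const_mul 2)
        have h2 : Tendsto (fun j => (p j - 2) * (c2/c3) ^ (p j - 4)) atTop (𝓝 (0 + 2*0)) :=
          h.congr (fun j => by ring)
        simpa using h2
      have hT : Tendsto (fun j => uj j (x j) * ((c2/c3) ^ (p j - 4))
          * (c2 ^ 2 * |lapl ψ (x j)| + (p j - 2) * |infLap ψ (x j)|) / c3 ^ 4)
          atTop (𝓝 0) := by
        have hsum : Tendsto (fun j => c2 ^ 2 * |lapl ψ (x j)| * ((c2/c3) ^ (p j - 4))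
            + |infLap ψ (x j)| * ((p j - 2) * (c2/c3) ^ (p j - 4)))
            atTop (𝓝 (c2 ^ 2 * |lapl φ x₀| * 0 + |infLap φ x₀| * 0)) :=
          ((hLtend.abs.const_mul (c2 ^ 2)).mul hr4).add (hItend.abs.mul hpr)
        have hprod : Tendsto (fun j => uj j (x j) * (c2 ^ 2 * |lapl ψ (x j)| * ((c2/c3) ^ (p j - 4))
            + |infLap ψ (x j)| * ((p j - 2) * (c2/c3) ^ (p j - 4))) / c3 ^ 4)
            atTop (𝓝 (u x₀ * (c2 ^ 2 * |lapl φ x₀| * 0 + |infLap φ x₀| * 0) / c3 ^ 4)) :=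
          (hxval.mul hsum).div_const _
        have h : Tendsto (fun j => uj j (x j) * ((c2/c3) ^ (p j - 4))
            * (c2 ^ 2 * |lapl ψ (x j)| + (p j - 2) * |infLap ψ (x j)|) / c3 ^ 4)
            atTop (𝓝 (u x₀ * (c2 ^ 2 * |lapl φ x₀| * 0 + |infLap φ x₀| * 0) / c3 ^ 4)) :=
          hprod.congr (fun j => by ring)
        simpa using h
      have : (1:ℝ) ≤ 0 := ge_of_tendsto hT ET
      linarith
    -- Claim B : 0 ≤ infLap φ x₀
    have hclaimB : 0 ≤ infLap φ x₀ := by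
      by_contra hcon
      push_neg at hcon
      have hGpos : 0 < G := lt_of_lt_of_le hβV hclaimA
      set d : ℝ := -(infLap φ x₀)/2 with hddef
      have hd : 0 < d := by rw [hddef]; linarith
      have EI : ∀ᶠ j in atTop, infLap ψ (x j) ≤ -d :=
        hItend.eventually (eventually_le_nhds (by rw [hddef]; linarith))
      have EL : ∀ᶠ j in atTop, ‖gradient ψ (x j)‖ ^ 2 * lapl ψ (x j)
          ≤ G ^ 2 * lapl φ x₀ + 1 :=
        ((hgn.pow 2).mul hLtend).eventually (eventually_le_nhds (lt_add_one _))
      have EP : ∀ᶠ j in atTop, G ^ 2 * lapl φ x₀ + 1 < (p j - 2) * d :=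
        (hp2top.atTop_mul_const hd).eventually_gt_atTop _
      obtain ⟨j, hj1, hj2, hj3, hj4⟩ := (EKey.and (EI.and (EL.and EP))).exists
      obtain ⟨hne, hineq⟩ := hj1
      have hvpos : 0 < uj j (x j) := hujpos j (x j) (hxΩ j)
      have hsub := subB_alg (hp j) (norm_pos_iff.mpr hne) hvpos (hlam j) hineq
      have hmono : (p j - 2) * d ≤ (p j - 2) * (-(infLap ψ (x j))) := by
        apply mul_le_mul_of_nonneg_left _ (by linarith [hp j])
        linarith
      linarith
    refine le_min ?_ hclaimB
    rw [hφeq]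
    linarith
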